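/- Let p, q be integers with 1 ≤ p < q and assume p divides q. If v is a valley word, then the element of BS(p,q) represented by v commutes with a^p; that is, a^p · v = v · a^p holds in BS(p,q). -/

import Mathlib

inductive Letter : Type
  | a | A | t | T
  deriving DecidableEq

def bsRel (p q : ℤ) : Set (FreeGroup Bool) :=
  {FreeGroup.of true * (FreeGroup.of false) ^ p * (FreeGroup.of true)⁻¹ * (FreeGroup.of false) ^ (-q)}

abbrev BS (p q : ℤ) := PresentedGroup (bsRel p q)

def evalLetter (p q : ℤ) : Letter → BS p q
  | .a => PresentedGroup.of false
  | .A => (PresentedGroup.of false)⁻¹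
  | .t => PresentedGroup.of true
  | .T => (PresentedGroup.of true)⁻¹

def eval (p q : ℤ) (w : List Letter) : BS p q := (w.map (evalLetter p q)).prod

def aPow (α : ℤ) : List Letter :=
  if 0 ≤ α then List.replicate α.toNat Letter.a else List.replicate (-α).toNat Letter.A

def Geodesic (p q : ℤ) (w : List Letter) : Prop :=
  ∀ v : List Letter, eval p q v = eval p q w → w.length ≤ v.length

/-- Ranking of letters in the order `t < T < a < A`. -/
def letterIdx : Letter → ℕ
  | .t => 0
  | .T => 1
  | .a => 2
  | .A => 3

/-- Length-lexicographical strict order on words, with letters ordered `t < T < a < A`. -/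
def llLt (u v : List Letter) : Prop :=
  u.length < v.length ∨
    (u.length = v.length ∧ List.Lex (· < ·) (u.map letterIdx) (v.map letterIdx))

/-- `IsLlnf p q v w` : `v` is the length-lexicographical normal form of `w`,
i.e. `v` represents the same element as `w` and no word representing this element
precedes `v` in the length-lexicographical order. -/
def IsLlnf (p q : ℤ) (v w : List Letter) : Prop :=
  eval p q v = eval p q w ∧ ∀ u : List Letter, eval p q u = eval p q w → ¬ llLt u v

/-- A word contains no factors `a a⁻¹` or `a⁻¹ a`. -/
def Reduced (w : List Letter) : Prop :=
  (∀ u v : List Letter, w ≠ u ++ [Letter.a, Letter.A] ++ v) ∧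
  (∀ u v : List Letter, w ≠ u ++ [Letter.A, Letter.a] ++ v)

/-- A word is Britton-reduced: it has no factors `a a⁻¹`, `a⁻¹ a`,
`t a^{pμ} t⁻¹` or `t⁻¹ a^{qμ} t` (with `μ ∈ ℤ`). -/
def BrittonReduced (p q : ℤ) (w : List Letter) : Prop :=
  Reduced w ∧
  (∀ u v : List Letter, ∀ μ : ℤ, w ≠ u ++ [Letter.t] ++ aPow (p * μ) ++ [Letter.T] ++ v) ∧
  (∀ u v : List Letter, ∀ μ : ℤ, w ≠ u ++ [Letter.T] ++ aPow (q * μ) ++ [Letter.t] ++ v)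

/-- The t-sequence of a word: its subsequence of letters from `{t, t⁻¹}`. -/
def tSeq (w : List Letter) : List Letter :=
  w.filter (fun c => c == Letter.t || c == Letter.T)

/-- The geodesic length of a group element: the least length of a word representing it. -/
noncomputable def geodesicLength (p q : ℤ) (g : BS p q) : ℕ :=
  sInf {n : ℕ | ∃ w : List Letter, eval p q w = g ∧ w.length = n}

/-- A valley: every prefix has height `≤ 0` and the total height is `0`,
where the height of a prefix is (number of `t`'s) − (number of `t⁻¹`'s). -/
def IsValley (w : List Letter) : Prop :=
  (∀ u v : List Letter, w = u ++ v → u.count Letter.t ≤ u.count Letter.T) ∧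
  w.count Letter.t = w.count Letter.T


lemma eval_aPow (p q α : ℤ) : eval p q (aPow α) = (PresentedGroup.of false : BS p q) ^ α := by
  unfold eval aPow
  split
  · rw [List.map_replicate, List.prod_replicate, evalLetter, ← zpow_natCast,
      Int.toNat_of_nonneg ‹_›]
  · rw [List.map_replicate, List.prod_replicate, evalLetter, inv_pow, ← zpow_natCast,
      Int.toNat_of_nonneg (by omega), ← zpow_neg, neg_neg]

lemma bs_rel (p q : ℤ) :
    (PresentedGroup.of true : BS p q) * (PresentedGroup.of false) ^ p *
      (PresentedGroup.of true)⁻¹ = (PresentedGroup.of false) ^ q := by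
  have h : (PresentedGroup.mk (bsRel p q)
      (FreeGroup.of true * (FreeGroup.of false) ^ p * (FreeGroup.of true)⁻¹ *
        (FreeGroup.of false) ^ (-q))) = 1 := by
    have : (FreeGroup.of true * (FreeGroup.of false) ^ p * (FreeGroup.of true)⁻¹ *
        (FreeGroup.of false) ^ (-q)) ∈ Subgroup.normalClosure (bsRel p q) :=
      Subgroup.subset_normalClosure rfl
    exact (QuotientGroup.eq_one_iff _).mpr this
  simp only [map_mul, map_zpow, map_inv] at h
  have := mul_eq_one_iff_eq_inv.mp h
  rw [zpow_neg, inv_inv] at this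
  exact this

lemma bs_conj (p q : ℤ) (k : ℤ) :
    (PresentedGroup.of true : BS p q) * (PresentedGroup.of false) ^ (p * k) *
      (PresentedGroup.of true)⁻¹ = (PresentedGroup.of false) ^ (q * k) := by
  calc (PresentedGroup.of true : BS p q) * (PresentedGroup.of false) ^ (p * k) *
        (PresentedGroup.of true)⁻¹
      = PresentedGroup.of true * ((PresentedGroup.of false) ^ p) ^ k *
        (PresentedGroup.of true)⁻¹ := by rw [zpow_mul]
    _ = (PresentedGroup.of true * (PresentedGroup.of false) ^ p *
        (PresentedGroup.of true)⁻¹) ^ k := conj_zpow.symm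
    _ = ((PresentedGroup.of false) ^ q) ^ k := by rw [bs_rel]
    _ = (PresentedGroup.of false) ^ (q * k) := by rw [zpow_mul]

lemma key (p q d : ℤ) (hq : q = p * d) : ∀ (v : List Letter) (m : ℕ),
    (∀ u w : List Letter, v = u ++ w → u.count Letter.t ≤ u.count Letter.T + m) →
    (PresentedGroup.of false : BS p q) ^ (p * d ^ m) * eval p q v
      = eval p q v *
        (PresentedGroup.of false) ^ (p * d ^ (m + v.count Letter.T - v.count Letter.t)) := by
  intro v
  induction v with
  | nil => intro m _; simp [eval]
  | cons c v ih =>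
    intro m H
    set x : BS p q := PresentedGroup.of false with hx
    have heval : eval p q (c :: v) = evalLetter p q c * eval p q v := by
      simp [eval]
    cases c with
    | a =>
      have ih' := ih m (fun u w h => by
        have := H (Letter.a :: u) w (by rw [h]; rfl)
        simpa [List.count_cons] using this)
      have hc : x ^ (p * d ^ m) * x = x * x ^ (p * d ^ m) :=
        ((Commute.refl x).zpow_left (p * d ^ m)).eq
      have hexp : m + (Letter.a :: v).count Letter.T - (Letter.a :: v).count Letter.t
          = m + v.count Letter.T - v.count Letter.t := by simp [List.count_cons]
      rw [heval, evalLetter, hexp, ← mul_assoc, hc, mul_assoc, ih', ← mul_assoc]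
    | A =>
      have ih' := ih m (fun u w h => by
        have := H (Letter.A :: u) w (by rw [h]; rfl)
        simpa [List.count_cons] using this)
      have hc : x ^ (p * d ^ m) * x⁻¹ = x⁻¹ * x ^ (p * d ^ m) :=
        (((Commute.refl x).zpow_left (p * d ^ m)).inv_right).eq
      have hexp : m + (Letter.A :: v).count Letter.T - (Letter.A :: v).count Letter.t
          = m + v.count Letter.T - v.count Letter.t := by simp [List.count_cons]
      rw [heval, evalLetter, hexp, ← mul_assoc, hc, mul_assoc, ih', ← mul_assoc]
    | t =>
      have hm : 1 ≤ m := by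
        have := H [Letter.t] v rfl
        simpa [List.count_cons] using this
      have ih' := ih (m - 1) (fun u w h => by
        have := H (Letter.t :: u) w (by rw [h]; rfl)
        simp [List.count_cons] at this ⊢
        omega)
      have hpush : x ^ (p * d ^ m) * PresentedGroup.of true
          = PresentedGroup.of true * x ^ (p * d ^ (m - 1)) := by
        rw [hx]
        have h1 : p * d ^ m = q * d ^ (m - 1) := by
          rw [hq, mul_assoc, ← pow_succ']
          congr 2
          omega
        have h2 := bs_conj p q (d ^ (m - 1))
        rw [h1, ← h2]
        group
      have hexp : m + (Letter.t :: v).count Letter.T - (Letter.t :: v).count Letter.t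
          = (m - 1) + v.count Letter.T - v.count Letter.t := by
        simp [List.count_cons]; omega
      rw [heval, evalLetter, hexp, ← mul_assoc, hpush, mul_assoc, ih', ← mul_assoc]
    | T =>
      have ih' := ih (m + 1) (fun u w h => by
        have := H (Letter.T :: u) w (by rw [h]; rfl)
        simp [List.count_cons] at this ⊢
        omega)
      have hpush : x ^ (p * d ^ m) * (PresentedGroup.of true)⁻¹
          = (PresentedGroup.of true)⁻¹ * x ^ (p * d ^ (m + 1)) := by
        rw [hx]
        have h1 : p * d ^ (m + 1) = q * d ^ m := by
          rw [hq, mul_assoc, ← pow_succ']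
        have h2 := bs_conj p q (d ^ m)
        rw [h1, ← h2]
        group
      have hexp : m + (Letter.T :: v).count Letter.T - (Letter.T :: v).count Letter.t
          = (m + 1) + v.count Letter.T - v.count Letter.t := by
        simp [List.count_cons]; omega
      rw [heval, evalLetter, hexp, ← mul_assoc, hpush, mul_assoc, ih', ← mul_assoc]


theorem valley_commutes_with_ap (p q : ℤ) (hp : 1 ≤ p) (hpq : p < q) (hdvd : p ∣ q)
    (v : List Letter) (hv : IsValley v) :
    eval p q (aPow p) * eval p q v = eval p q v * eval p q (aPow p) := by
  obtain ⟨d, hd⟩ := hdvd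
  have H : ∀ u w : List Letter, v = u ++ w →
      u.count Letter.t ≤ u.count Letter.T + 0 := fun u w h => by
    simpa using hv.1 u w h
  have k := key p q d hd v 0 H
  have h0 : 0 + v.count Letter.T - v.count Letter.t = 0 := by
    rw [hv.2]; omega
  rw [h0] at k
  rw [eval_aPow]
  simpa using k
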